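/- Fix an integer L ≥ 1 and a real P > 0, and let F(x) = 1 − e^{−Lx} Σ_{k=0}^{L−1} (Lx)^k / k! with density f(x) = L e^{−Lx} (Lx)^{L−1}/(L−1)! for x ≥ 0. Then the throughput of the best-user scheduler with L transmit antennas, R_tot(N) = ∫_0^∞ log(1+Px) · N F(x)^{N−1} f(x) dx, satisfies R_tot(N) = Θ( log(1 + (log N + (L−1) log log N)/L) ): there exist constants 0 < c₁ ≤ c₂ and N₀ such that c₁ · log(1 + (log N + (L−1) log log N)/L) ≤ R_tot(N) ≤ c₂ · log(1 + (log N + (L−1) log log N)/L) for all N ≥ N₀. -/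

import Mathlib

open Real Set Finset MeasureTheory Filter

namespace BUMT

noncomputable def S (L : ℕ) (x : ℝ) : ℝ := ∑ k ∈ Finset.range L, ((L : ℝ) * x) ^ k / (Nat.factorial k : ℝ)

noncomputable def F (L : ℕ) (x : ℝ) : ℝ := 1 - Real.exp (-(L : ℝ) * x) * S L x

noncomputable def f (L : ℕ) (x : ℝ) : ℝ :=
  (L : ℝ) * Real.exp (-(L : ℝ) * x) * ((L : ℝ) * x) ^ (L - 1) / (Nat.factorial (L - 1) : ℝ)

lemma continuous_S (L : ℕ) : Continuous (S L) := by
  unfold S; fun_prop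

lemma continuous_F (L : ℕ) : Continuous (F L) := by
  unfold F S; fun_prop

lemma continuous_f (L : ℕ) : Continuous (f L) := by
  unfold f; fun_prop

lemma hasDerivAt_F (L : ℕ) (hL : 1 ≤ L) (x : ℝ) : HasDerivAt (F L) (f L x) x := by
  obtain ⟨L', rfl⟩ : ∃ L', L = L' + 1 := ⟨L - 1, by omega⟩
  set c : ℝ := ((L' + 1 : ℕ) : ℝ) with hc
  have hS : HasDerivAt (S (L' + 1))
      (c * ∑ k ∈ Finset.range L', (c * x) ^ k / (Nat.factorial k : ℝ)) x := by
    have hterm : ∀ k ∈ Finset.range (L' + 1), HasDerivAt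
        (fun y => (c * y) ^ k / (Nat.factorial k : ℝ))
        (((k : ℝ) * (c * x) ^ (k - 1) * (c * 1)) / (Nat.factorial k : ℝ)) x := by
      intro k _
      exact (((hasDerivAt_id x).const_mul c).pow k).div_const _
    have h := HasDerivAt.fun_sum hterm
    refine h.congr_deriv ?_
    symm
    rw [Finset.sum_range_succ']
    simp only [Nat.cast_zero, zero_mul, pow_zero, Nat.factorial_zero, Nat.cast_one, zero_div,
      add_zero]
    rw [Finset.mul_sum]
    refine Finset.sum_congr rfl fun j _ => ?_
    have hfac : ((Nat.factorial (j + 1) : ℝ)) = (j + 1 : ℝ) * (Nat.factorial j : ℝ) := by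
      rw [Nat.factorial_succ]; push_cast; ring
    have hfj : (Nat.factorial j : ℝ) ≠ 0 := Nat.cast_ne_zero.2 (Nat.factorial_ne_zero j)
    rw [hfac, Nat.add_sub_cancel]; push_cast
    field_simp
  have hexp : HasDerivAt (fun y : ℝ => Real.exp (-c * y)) (Real.exp (-c * x) * (-c * 1)) x :=
    ((hasDerivAt_id x).const_mul (-c)).exp
  have hprod := hexp.mul hS
  have hF : HasDerivAt (F (L' + 1))
      (0 - (Real.exp (-c * x) * (-c * 1) * S (L' + 1) x +
        Real.exp (-c * x) * (c * ∑ k ∈ Finset.range L', (c * x) ^ k / (Nat.factorial k : ℝ)))) x :=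
    (hasDerivAt_const x (1 : ℝ)).sub hprod
  convert hF using 1
  have hsplit : S (L' + 1) x =
      (∑ k ∈ Finset.range L', (c * x) ^ k / (Nat.factorial k : ℝ)) +
        (c * x) ^ L' / (Nat.factorial L' : ℝ) := by
    unfold S; rw [Finset.sum_range_succ, ← hc]
  unfold f
  simp only [Nat.add_sub_cancel]
  rw [← hc, hsplit]
  have hfL : (Nat.factorial L' : ℝ) ≠ 0 := Nat.cast_ne_zero.2 (Nat.factorial_ne_zero L')
  field_simp
  ring

lemma S_one_le (L : ℕ) (hL : 1 ≤ L) {x : ℝ} (hx : 0 ≤ x) : 1 ≤ S L x := by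
  unfold S
  have h0 : (0 : ℕ) ∈ Finset.range L := Finset.mem_range.2 (by omega)
  have := Finset.single_le_sum (f := fun k => ((L : ℝ) * x) ^ k / (Nat.factorial k : ℝ))
    (fun k _ => by positivity) h0
  simpa using this

lemma S_le_exp (L : ℕ) {x : ℝ} (hx : 0 ≤ x) : S L x ≤ Real.exp ((L : ℝ) * x) :=
  Real.sum_le_exp_of_nonneg (by positivity) L

lemma F_nonneg (L : ℕ) {x : ℝ} (hx : 0 ≤ x) : 0 ≤ F L x := by
  unfold F
  rw [neg_mul]
  have h1 : Real.exp (-((L : ℝ) * x)) * S L x ≤ 1 := by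
    have := mul_le_mul_of_nonneg_left (S_le_exp L hx) (Real.exp_pos (-((L : ℝ) * x))).le
    rwa [← Real.exp_add, neg_add_cancel, Real.exp_zero] at this
  linarith

lemma F_le_one_sub (L : ℕ) (hL : 1 ≤ L) {x : ℝ} (hx : 0 ≤ x) :
    F L x ≤ 1 - Real.exp (-(L : ℝ) * x) := by
  unfold F
  have h := mul_le_mul_of_nonneg_left (S_one_le L hL hx) (Real.exp_pos (-(L : ℝ) * x)).le
  rw [mul_one] at h
  linarith

lemma F_le_one (L : ℕ) (hL : 1 ≤ L) {x : ℝ} (hx : 0 ≤ x) : F L x ≤ 1 :=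
  (F_le_one_sub L hL hx).trans (by linarith [Real.exp_pos (-(L : ℝ) * x)])

lemma f_nonneg (L : ℕ) {x : ℝ} (hx : 0 ≤ x) : 0 ≤ f L x := by
  unfold f; positivity

lemma F_zero (L : ℕ) (hL : 1 ≤ L) : F L 0 = 0 := by
  obtain ⟨L', rfl⟩ : ∃ L', L = L' + 1 := ⟨L - 1, by omega⟩
  unfold F S
  rw [Finset.sum_range_succ']
  simp

lemma tendsto_F (L : ℕ) (hL : 1 ≤ L) : Tendsto (F L) atTop (nhds 1) := by
  have key : Tendsto (fun x => Real.exp (-(L : ℝ) * x) * S L x) atTop (nhds 0) := by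
    have heq : ∀ x : ℝ, Real.exp (-(L : ℝ) * x) * S L x =
        ∑ k ∈ Finset.range L, ((L : ℝ) * x) ^ k * Real.exp (-((L : ℝ) * x)) / (Nat.factorial k : ℝ) := by
      intro x; unfold S; rw [Finset.mul_sum]; refine Finset.sum_congr rfl fun k _ => ?_; rw [neg_mul]; ring
    simp only [heq]
    rw [show (0 : ℝ) = ∑ k ∈ Finset.range L, 0 by simp]
    refine tendsto_finset_sum _ fun k _ => ?_
    have hmul : Tendsto (fun x : ℝ => (L : ℝ) * x) atTop atTop :=
      Tendsto.const_mul_atTop (by positivity) tendsto_id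
    have h1 := (tendsto_pow_mul_exp_neg_atTop_nhds_zero k).comp hmul
    have h2 := h1.div_const (Nat.factorial k : ℝ)
    simpa [Function.comp] using h2
  unfold F
  have := (tendsto_const_nhds (x := (1 : ℝ)) (f := atTop)).sub key
  simpa using this

lemma hasDerivAt_FN (L : ℕ) (hL : 1 ≤ L) (N : ℕ) (x : ℝ) :
    HasDerivAt (fun y => F L y ^ N) ((N : ℝ) * F L x ^ (N - 1) * f L x) x :=
  (hasDerivAt_F L hL x).pow N

/-- density of the maximum -/
noncomputable def D (L N : ℕ) (x : ℝ) : ℝ := (N : ℝ) * F L x ^ (N - 1) * f L x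

lemma D_nonneg (L : ℕ) (hL : 1 ≤ L) (N : ℕ) {x : ℝ} (hx : 0 ≤ x) : 0 ≤ D L N x := by
  unfold D
  have h1 := F_nonneg L (x := x) hx
  have h2 := f_nonneg L (x := x) hx
  positivity

lemma tendsto_FN (L : ℕ) (hL : 1 ≤ L) (N : ℕ) :
    Tendsto (fun y => F L y ^ N) atTop (nhds 1) := by
  simpa using (tendsto_F L hL).pow N

lemma integrableOn_D (L : ℕ) (hL : 1 ≤ L) (N : ℕ) {b : ℝ} (hb : 0 ≤ b) :
    IntegrableOn (D L N) (Ioi b) :=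
  integrableOn_Ioi_deriv_of_nonneg ((continuous_F L).pow N).continuousWithinAt
    (fun x hx => hasDerivAt_FN L hL N x) (fun x hx => D_nonneg L hL N (hb.trans hx.le))
    (tendsto_FN L hL N)

lemma integral_D (L : ℕ) (hL : 1 ≤ L) (N : ℕ) {b : ℝ} (hb : 0 ≤ b) :
    ∫ x in Ioi b, D L N x = 1 - F L b ^ N :=
  integral_Ioi_of_hasDerivAt_of_nonneg ((continuous_F L).pow N).continuousWithinAt
    (fun x hx => hasDerivAt_FN L hL N x) (fun x hx => D_nonneg L hL N (hb.trans hx.le))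
    (tendsto_FN L hL N)

/-- exponential integral -/
lemma integral_exp_neg_mul (a : ℝ) {c : ℝ} (hc : 0 < c) :
    ∫ x in Ioi a, Real.exp (-c * x) = Real.exp (-c * a) / c := by
  have hcont : Continuous fun x : ℝ => -Real.exp (-c * x) / c :=
    ((Real.continuous_exp.comp (continuous_const.mul continuous_id)).neg).div_const c
  have hderiv : ∀ x ∈ Ioi a, HasDerivAt (fun x : ℝ => -Real.exp (-c * x) / c)
      (Real.exp (-c * x)) x := by
    intro x _
    have h1 : HasDerivAt (fun y : ℝ => Real.exp (-c * y)) (Real.exp (-c * x) * (-c * 1)) x :=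
      ((hasDerivAt_id x).const_mul (-c)).exp
    have h2 := (h1.neg).div_const c
    refine h2.congr_deriv ?_
    rw [div_eq_iff hc.ne']; ring
  have htend : Tendsto (fun x : ℝ => -Real.exp (-c * x) / c) atTop (nhds 0) := by
    have h1 : Tendsto (fun x : ℝ => -c * x) atTop atBot :=
      Tendsto.const_mul_atTop_of_neg (neg_neg_iff_pos.2 hc) tendsto_id
    have h2 := ((Real.tendsto_exp_atBot.comp h1).neg).div_const c
    simpa [Function.comp] using h2
  have := integral_Ioi_of_hasDerivAt_of_nonneg hcont.continuousWithinAt hderiv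
    (fun x _ => (Real.exp_pos _).le) htend
  rw [this]
  ring


lemma h_nonneg (L : ℕ) (hL : 1 ≤ L) (N : ℕ) {P x : ℝ} (hP : 0 < P) (hx : 0 ≤ x) :
    0 ≤ Real.log (1 + P * x) * D L N x :=
  mul_nonneg (Real.log_nonneg (by nlinarith)) (D_nonneg L hL N hx)

lemma xf_le (L : ℕ) (hL : 1 ≤ L) {x : ℝ} (hx : 0 ≤ x) :
    x * f L x ≤ 2 ^ L * (L : ℝ) * Real.exp (-((L : ℝ) / 2) * x) := by
  obtain ⟨L', rfl⟩ : ∃ L', L = L' + 1 := ⟨L - 1, by omega⟩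
  unfold f
  simp only [Nat.add_sub_cancel]
  set c : ℝ := ((L' + 1 : ℕ) : ℝ) with hc
  have hc0 : 0 < c := by rw [hc]; positivity
  have hfpos : (0 : ℝ) < (Nat.factorial L' : ℝ) := by positivity
  have hser : ((c * x) / 2) ^ (L' + 1) / (Nat.factorial (L' + 1) : ℝ) ≤
      Real.exp ((c * x) / 2) := by
    have hmem : (L' + 1) ∈ Finset.range (L' + 2) := by simp
    have h1 := Finset.single_le_sum
      (f := fun k => ((c * x) / 2) ^ k / (Nat.factorial k : ℝ)) (fun k _ => by positivity) hmem
    exact h1.trans (Real.sum_le_exp_of_nonneg (by positivity) _)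
  have hfact : ((Nat.factorial (L' + 1) : ℝ)) = c * (Nat.factorial L' : ℝ) := by
    rw [hc, Nat.factorial_succ]; push_cast; ring
  have hpow : (c * x) ^ (L' + 1) ≤ 2 ^ (L' + 1) * (c * (Nat.factorial L' : ℝ)) *
      Real.exp (c * x / 2) := by
    rw [div_pow, hfact, div_div, div_le_iff₀ (by positivity)] at hser
    calc (c * x) ^ (L' + 1)
        ≤ Real.exp (c * x / 2) * (2 ^ (L' + 1) * (c * (Nat.factorial L' : ℝ))) := hser
      _ = 2 ^ (L' + 1) * (c * (Nat.factorial L' : ℝ)) * Real.exp (c * x / 2) := by ring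
  have e1 : Real.exp (-(c / 2) * x) = Real.exp (c * x / 2) * Real.exp (-c * x) := by
    rw [← Real.exp_add]; congr 1; ring
  have hE : (0 : ℝ) < Real.exp (-c * x) := Real.exp_pos _
  have hpow2 := mul_le_mul_of_nonneg_right hpow hE.le
  calc x * (c * Real.exp (-c * x) * (c * x) ^ L' / (Nat.factorial L' : ℝ))
      = (c * x) ^ (L' + 1) * Real.exp (-c * x) / (Nat.factorial L' : ℝ) := by
        rw [pow_succ]; ring
    _ ≤ 2 ^ (L' + 1) * (c * (Nat.factorial L' : ℝ)) * Real.exp (c * x / 2) *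
          Real.exp (-c * x) / (Nat.factorial L' : ℝ) := by gcongr
    _ = 2 ^ (L' + 1) * c * (Real.exp (c * x / 2) * Real.exp (-c * x)) := by
        field_simp
    _ = 2 ^ (L' + 1) * c * Real.exp (-(c / 2) * x) := by rw [e1]

lemma h_le (L : ℕ) (hL : 1 ≤ L) (N : ℕ) {P x : ℝ} (hP : 0 < P) (hx : 0 ≤ x) :
    Real.log (1 + P * x) * D L N x ≤
      (N : ℝ) * P * 2 ^ L * (L : ℝ) * Real.exp (-((L : ℝ) / 2) * x) := by
  have hlog : Real.log (1 + P * x) ≤ P * x := by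
    have := Real.log_le_sub_one_of_pos (show (0 : ℝ) < 1 + P * x by positivity)
    linarith
  have hD : D L N x ≤ (N : ℝ) * f L x := by
    unfold D
    have h1 : F L x ^ (N - 1) ≤ 1 := pow_le_one₀ (F_nonneg L hx) (F_le_one L hL hx)
    have h2 := f_nonneg L (x := x) hx
    calc (N : ℝ) * F L x ^ (N - 1) * f L x ≤ (N : ℝ) * 1 * f L x :=
          mul_le_mul_of_nonneg_right (mul_le_mul_of_nonneg_left h1 (Nat.cast_nonneg N)) h2
      _ = (N : ℝ) * f L x := by ring
  calc Real.log (1 + P * x) * D L N x ≤ (P * x) * ((N : ℝ) * f L x) :=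
        mul_le_mul hlog hD (D_nonneg L hL N hx) (by positivity)
    _ = (N : ℝ) * P * (x * f L x) := by ring
    _ ≤ (N : ℝ) * P * (2 ^ L * (L : ℝ) * Real.exp (-((L : ℝ) / 2) * x)) :=
        mul_le_mul_of_nonneg_left (xf_le L hL hx) (by positivity)
    _ = (N : ℝ) * P * 2 ^ L * (L : ℝ) * Real.exp (-((L : ℝ) / 2) * x) := by ring

lemma continuousOn_h (L N : ℕ) (P : ℝ) (hP : 0 < P) :
    ContinuousOn (fun x => Real.log (1 + P * x) * D L N x) (Ioi 0) := by
  have hcD : Continuous (D L N) := by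
    unfold D
    exact (continuous_const.mul ((continuous_F L).pow (N - 1))).mul (continuous_f L)
  have hclog : ContinuousOn (fun x : ℝ => Real.log (1 + P * x)) (Ioi 0) := by
    apply ContinuousOn.log
    · fun_prop
    · intro x hx
      have hx' : (0 : ℝ) < x := hx
      positivity
  exact hclog.mul hcD.continuousOn

lemma integrableOn_h (L : ℕ) (hL : 1 ≤ L) (N : ℕ) {P : ℝ} (hP : 0 < P) :
    IntegrableOn (fun x => Real.log (1 + P * x) * D L N x) (Ioi 0) := by
  have h0 : (0 : ℝ) < (L : ℝ) / 2 := by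
    have : (1 : ℝ) ≤ (L : ℝ) := by exact_mod_cast hL
    linarith
  have hg : IntegrableOn
      (fun x => (N : ℝ) * P * 2 ^ L * (L : ℝ) * Real.exp (-((L : ℝ) / 2) * x)) (Ioi 0) :=
    (exp_neg_integrableOn_Ioi 0 h0).const_mul _
  refine hg.mono' ((continuousOn_h L N P hP).aestronglyMeasurable measurableSet_Ioi) ?_
  filter_upwards [ae_restrict_mem measurableSet_Ioi] with x hx
  have hx0 : (0 : ℝ) ≤ x := (mem_Ioi.1 hx).le
  rw [Real.norm_eq_abs, abs_of_nonneg (h_nonneg L hL N hP hx0)]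
  exact h_le L hL N hP hx0

end BUMT

open BUMT

set_option maxHeartbeats 2000000 in
theorem best_user_multiantenna_throughput_theta (L : ℕ) (hL : 1 ≤ L) (P : ℝ) (hP : 0 < P) :
    ∃ c₁ c₂ : ℝ, ∃ N₀ : ℕ, 0 < c₁ ∧ c₁ ≤ c₂ ∧
      ∀ N : ℕ, N₀ ≤ N →
        c₁ * Real.log (1 + (Real.log N + ((L : ℝ) - 1) * Real.log (Real.log N)) / L) ≤
            (∫ x in Ioi (0 : ℝ), Real.log (1 + P * x) *
              ((N : ℝ) *
                (1 - Real.exp (-(L : ℝ) * x) *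
                  ∑ k ∈ Finset.range L, ((L : ℝ) * x) ^ k / (Nat.factorial k : ℝ)) ^ (N - 1) *
                ((L : ℝ) * Real.exp (-(L : ℝ) * x) * ((L : ℝ) * x) ^ (L - 1) /
                  (Nat.factorial (L - 1) : ℝ)))) ∧
          (∫ x in Ioi (0 : ℝ), Real.log (1 + P * x) *
              ((N : ℝ) *
                (1 - Real.exp (-(L : ℝ) * x) *
                  ∑ k ∈ Finset.range L, ((L : ℝ) * x) ^ k / (Nat.factorial k : ℝ)) ^ (N - 1) *
                ((L : ℝ) * Real.exp (-(L : ℝ) * x) * ((L : ℝ) * x) ^ (L - 1) /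
                  (Nat.factorial (L - 1) : ℝ)))) ≤
            c₂ * Real.log (1 + (Real.log N + ((L : ℝ) - 1) * Real.log (Real.log N)) / L) := by
  have hL1 : (1 : ℝ) ≤ (L : ℝ) := by exact_mod_cast hL
  have hL0 : (0 : ℝ) < (L : ℝ) := by linarith
  set m : ℕ := max 1 (Nat.ceil (2 * (L : ℝ) / P)) with hm
  have hm1 : 1 ≤ m := le_max_left _ _
  have hmR : (0 : ℝ) < (m : ℝ) := by exact_mod_cast hm1
  have hm1R : (1 : ℝ) ≤ (m : ℝ) := by exact_mod_cast hm1
  refine ⟨1 / (2 * (m : ℝ)), (L : ℝ) * (1 + Real.log (1 + 4 * P) + P * 2 ^ (L + 1)), 16,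
    by positivity, ?_, ?_⟩
  · have h1 : (0 : ℝ) ≤ Real.log (1 + 4 * P) := Real.log_nonneg (by linarith)
    have h2 : (0 : ℝ) ≤ P * 2 ^ (L + 1) := by positivity
    have h3 : (1 : ℝ) / (2 * (m : ℝ)) ≤ 1 := by
      rw [div_le_one (by positivity)]
      linarith
    have h4 : (1 : ℝ) * 1 ≤ (L : ℝ) * (1 + Real.log (1 + 4 * P) + P * 2 ^ (L + 1)) :=
      mul_le_mul hL1 (by linarith) (by norm_num) hL0.le
    linarith
  intro N hN
  have hIeq : (∫ x in Ioi (0 : ℝ), Real.log (1 + P * x) *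
      ((N : ℝ) * (1 - Real.exp (-(L : ℝ) * x) *
          ∑ k ∈ Finset.range L, ((L : ℝ) * x) ^ k / (Nat.factorial k : ℝ)) ^ (N - 1) *
        ((L : ℝ) * Real.exp (-(L : ℝ) * x) * ((L : ℝ) * x) ^ (L - 1) /
          (Nat.factorial (L - 1) : ℝ)))) =
      ∫ x in Ioi (0 : ℝ), Real.log (1 + P * x) * D L N x := by
    unfold D F S f
    rfl
  rw [hIeq]
  have hN16 : (16 : ℝ) ≤ (N : ℝ) := by exact_mod_cast hN
  have hNpos : (0 : ℝ) < (N : ℝ) := by linarith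
  have hNne : N ≠ 0 := by omega
  have hln2 : (2 : ℝ) ≤ Real.log N := by
    have he2 : Real.exp 2 ≤ 16 := by
      have h9 := Real.exp_one_lt_d9
      have he : Real.exp 2 = Real.exp 1 * Real.exp 1 := by
        rw [← Real.exp_add]; norm_num
      nlinarith [Real.exp_pos 1]
    calc (2 : ℝ) = Real.log (Real.exp 2) := (Real.log_exp 2).symm
      _ ≤ Real.log 16 := Real.log_le_log (Real.exp_pos 2) he2
      _ ≤ Real.log N := Real.log_le_log (by norm_num) hN16
  have hlnpos : (0 : ℝ) < Real.log N := by linarith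
  have hllnn : (0 : ℝ) ≤ Real.log (Real.log N) := Real.log_nonneg (by linarith)
  have hlln_le : Real.log (Real.log N) ≤ Real.log N := by
    have := Real.log_le_sub_one_of_pos hlnpos; linarith
  set g : ℝ := (Real.log N + ((L : ℝ) - 1) * Real.log (Real.log N)) / L with hgdef
  have hg0 : 0 ≤ g := by
    rw [hgdef]
    apply div_nonneg _ hL0.le
    nlinarith
  have hg_le : g ≤ Real.log N := by
    rw [hgdef, div_le_iff₀ hL0]
    nlinarith
  have hg_ge : Real.log N / (L : ℝ) ≤ g := by
    rw [hgdef]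
    gcongr
    nlinarith
  have h1g : (0 : ℝ) < 1 + g := by linarith
  have hT_le : Real.log (1 + g) ≤ Real.log (1 + Real.log N) :=
    Real.log_le_log h1g (by linarith)
  have hlog1 : (1 : ℝ) ≤ Real.log (1 + Real.log N) := by
    have h3 : Real.exp 1 ≤ 1 + Real.log N := by
      nlinarith [Real.exp_one_lt_d9]
    calc (1 : ℝ) = Real.log (Real.exp 1) := (Real.log_exp 1).symm
      _ ≤ Real.log (1 + Real.log N) := Real.log_le_log (Real.exp_pos 1) h3
  have hT_ge : Real.log (1 + Real.log N) ≤ (L : ℝ) * Real.log (1 + g) := by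
    have hb1 : (1 : ℝ) + Real.log N ≤ (1 + Real.log N / L) ^ L := by
      have h := one_add_mul_le_pow
        (a := Real.log N / (L : ℝ))
        (by nlinarith [div_nonneg hlnpos.le hL0.le] : (-2 : ℝ) ≤ Real.log N / L) L
      rw [show (L : ℝ) * (Real.log N / L) = Real.log N by field_simp] at h
      exact h
    have hmono : ((1 : ℝ) + Real.log N / L) ^ L ≤ (1 + g) ^ L :=
      pow_le_pow_left₀ (by positivity) (by linarith) L
    calc Real.log (1 + Real.log N) ≤ Real.log ((1 + g) ^ L) :=
          Real.log_le_log (by linarith) (hb1.trans hmono)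
      _ = (L : ℝ) * Real.log (1 + g) := by rw [Real.log_pow]
  set b : ℝ := Real.log N / (2 * (L : ℝ)) with hbdef
  have hb0 : 0 < b := by rw [hbdef]; positivity
  have hInt0 := integrableOn_h L hL N hP
  have hae0 : 0 ≤ᵐ[volume.restrict (Ioi (0 : ℝ))]
      (fun x => Real.log (1 + P * x) * D L N x) := by
    filter_upwards [ae_restrict_mem measurableSet_Ioi] with x hx
    exact h_nonneg L hL N hP (le_of_lt hx)
  have step1 : (∫ x in Ioi b, Real.log (1 + P * x) * D L N x) ≤
      ∫ x in Ioi (0 : ℝ), Real.log (1 + P * x) * D L N x :=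
    setIntegral_mono_set hInt0 hae0 (HasSubset.Subset.eventuallyLE (Ioi_subset_Ioi hb0.le))
  have step2 : Real.log (1 + P * b) * (1 - F L b ^ N) ≤
      ∫ x in Ioi b, Real.log (1 + P * x) * D L N x := by
    have h1 : (∫ x in Ioi b, Real.log (1 + P * b) * D L N x) ≤
        ∫ x in Ioi b, Real.log (1 + P * x) * D L N x := by
      refine setIntegral_mono_on ((integrableOn_D L hL N hb0.le).const_mul _)
        (hInt0.mono_set (Ioi_subset_Ioi hb0.le)) measurableSet_Ioi ?_
      intro x hx
      have hbx : b < x := hx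
      have hlog2 : Real.log (1 + P * b) ≤ Real.log (1 + P * x) :=
        Real.log_le_log (by positivity) (by nlinarith)
      exact mul_le_mul_of_nonneg_right hlog2 (D_nonneg L hL N (hb0.le.trans hbx.le))
    rwa [MeasureTheory.integral_const_mul, integral_D L hL N hb0.le] at h1
  have hLb : -(L : ℝ) * b = -(Real.log N / 2) := by
    rw [hbdef]; field_simp [hL0.ne']
  have hFb2 : F L b ^ N ≤ 1 / 2 := by
    have hFb : F L b ≤ 1 - Real.exp (-(L : ℝ) * b) := F_le_one_sub L hL hb0.le
    have ht1 : Real.exp (-(L : ℝ) * b) ≤ 1 := by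
      rw [← Real.exp_zero]
      apply Real.exp_le_exp.2
      rw [hLb]; linarith
    have hNt : (1 : ℝ) ≤ (N : ℝ) * Real.exp (-(L : ℝ) * b) := by
      rw [hLb]
      have heqN : (N : ℝ) * Real.exp (-(Real.log N / 2)) = Real.exp (Real.log N / 2) := by
        have h1 : Real.exp (Real.log N) = (N : ℝ) := Real.exp_log hNpos
        have hsq2 : Real.exp (Real.log N) =
            Real.exp (Real.log N / 2) * Real.exp (Real.log N / 2) := by
          rw [← Real.exp_add]; congr 1; ring
        have hh : Real.exp (-(Real.log N / 2)) * Real.exp (Real.log N / 2) = 1 := by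
          rw [← Real.exp_add]; simp
        linear_combination Real.exp (-(Real.log (N : ℝ) / 2)) * h1.symm +
          Real.exp (-(Real.log (N : ℝ) / 2)) * hsq2 + Real.exp (Real.log (N : ℝ) / 2) * hh
      rw [heqN, ← Real.exp_zero]
      exact Real.exp_le_exp.2 (by linarith)
    have hexp1 : Real.exp (-(1 : ℝ)) ≤ 1 / 2 := by
      have h2 : (2 : ℝ) ≤ Real.exp 1 := by have := Real.add_one_le_exp 1; linarith
      have hme : Real.exp (-(1 : ℝ)) * Real.exp 1 = 1 := by
        rw [← Real.exp_add]; norm_num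
      nlinarith [Real.exp_pos (-(1 : ℝ))]
    calc F L b ^ N ≤ (1 - Real.exp (-(L : ℝ) * b)) ^ N :=
          pow_le_pow_left₀ (F_nonneg L hb0.le) hFb N
      _ ≤ Real.exp (-Real.exp (-(L : ℝ) * b)) ^ N := by
          apply pow_le_pow_left₀ (by linarith)
          have := Real.add_one_le_exp (-Real.exp (-(L : ℝ) * b))
          linarith
      _ = Real.exp ((N : ℝ) * -Real.exp (-(L : ℝ) * b)) := (Real.exp_nat_mul _ N).symm
      _ ≤ Real.exp (-(1 : ℝ)) := by
          apply Real.exp_le_exp.2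
          rw [mul_neg]
          linarith
      _ ≤ 1 / 2 := hexp1
  have hceil : 2 * (L : ℝ) / P ≤ (m : ℝ) := by
    calc 2 * (L : ℝ) / P ≤ (Nat.ceil (2 * (L : ℝ) / P) : ℝ) := Nat.le_ceil _
      _ ≤ (m : ℝ) := by
        have hcm : Nat.ceil (2 * (L : ℝ) / P) ≤ m := le_max_right _ _
        exact_mod_cast hcm
  have h2LmP : 2 * (L : ℝ) ≤ (m : ℝ) * P := by
    have h := mul_le_mul_of_nonneg_right hceil hP.le
    rwa [div_mul_cancel₀ _ (ne_of_gt hP)] at h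
  have hmPb : Real.log N ≤ (m : ℝ) * (P * b) := by
    have heq : (m : ℝ) * (P * b) = ((m : ℝ) * P) * Real.log N / (2 * L) := by
      rw [hbdef]; ring
    rw [heq, le_div_iff₀ (by positivity)]
    nlinarith
  have hbern : 1 + Real.log N ≤ (1 + P * b) ^ m := by
    have h := one_add_mul_le_pow (a := P * b) (by nlinarith : (-2 : ℝ) ≤ P * b) m
    linarith
  have step5 : Real.log (1 + Real.log N) ≤ (m : ℝ) * Real.log (1 + P * b) := by
    calc Real.log (1 + Real.log N) ≤ Real.log ((1 + P * b) ^ m) :=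
          Real.log_le_log (by linarith) hbern
      _ = (m : ℝ) * Real.log (1 + P * b) := by rw [Real.log_pow]
  have hlogPb0 : 0 ≤ Real.log (1 + P * b) := Real.log_nonneg (by nlinarith)
  constructor
  · -- lower bound
    have c1 : Real.log (1 + P * b) * (1 / 2) ≤ Real.log (1 + P * b) * (1 - F L b ^ N) :=
      mul_le_mul_of_nonneg_left (by linarith) hlogPb0
    have hAm : Real.log (1 + Real.log N) / (m : ℝ) ≤ Real.log (1 + P * b) := by
      rw [div_le_iff₀ hmR]; linarith [step5]
    have c2 : (1 / (2 * (m : ℝ))) * Real.log (1 + Real.log N) ≤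
        Real.log (1 + P * b) * (1 / 2) := by
      have heq : (1 : ℝ) / (2 * (m : ℝ)) * Real.log (1 + Real.log N) =
          (Real.log (1 + Real.log N) / (m : ℝ)) * (1 / 2) := by
        ring
      rw [heq]
      exact mul_le_mul_of_nonneg_right hAm (by norm_num)
    have c3 : (1 / (2 * (m : ℝ))) * Real.log (1 + g) ≤
        (1 / (2 * (m : ℝ))) * Real.log (1 + Real.log N) :=
      mul_le_mul_of_nonneg_left hT_le (by positivity)
    linarith [step1, step2, c1, c2, c3]
  · -- upper bound
    set a : ℝ := 4 * Real.log N with hadef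
    have ha0 : 0 < a := by rw [hadef]; positivity
    set C : ℝ := (N : ℝ) * P * 2 ^ L * (L : ℝ) with hCdef
    have hindint : IntegrableOn
        (fun x => Set.indicator (Ioi a) (fun y => C * Real.exp (-((L : ℝ) / 2) * y)) x)
        (Ioi (0 : ℝ)) := by
      have hg2 : IntegrableOn (fun y => C * Real.exp (-((L : ℝ) / 2) * y)) (Ioi (0 : ℝ)) :=
        (exp_neg_integrableOn_Ioi 0 (by linarith : (0 : ℝ) < (L : ℝ) / 2)).const_mul _
      exact hg2.indicator measurableSet_Ioi
    have hDint : IntegrableOn (fun x => Real.log (1 + P * a) * D L N x) (Ioi (0 : ℝ)) :=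
      (integrableOn_D L hL N le_rfl).const_mul _
    have hPhiint : IntegrableOn (fun x => Real.log (1 + P * a) * D L N x +
        Set.indicator (Ioi a) (fun y => C * Real.exp (-((L : ℝ) / 2) * y)) x) (Ioi (0 : ℝ)) :=
      hDint.add hindint
    have hmono : ∀ x ∈ Ioi (0 : ℝ), Real.log (1 + P * x) * D L N x ≤
        Real.log (1 + P * a) * D L N x +
          Set.indicator (Ioi a) (fun y => C * Real.exp (-((L : ℝ) / 2) * y)) x := by
      intro x hx
      have hx0 : (0 : ℝ) < x := hx
      by_cases hxa : x ≤ a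
      · have h1 : Real.log (1 + P * x) * D L N x ≤ Real.log (1 + P * a) * D L N x :=
          mul_le_mul_of_nonneg_right (Real.log_le_log (by positivity) (by nlinarith))
            (D_nonneg L hL N hx0.le)
        have h2 : 0 ≤ Set.indicator (Ioi a) (fun y => C * Real.exp (-((L : ℝ) / 2) * y)) x :=
          Set.indicator_nonneg (fun y _ => by positivity) x
        linarith
      · push_neg at hxa
        rw [Set.indicator_of_mem (Set.mem_Ioi.2 hxa)]
        have h1 : Real.log (1 + P * x) * D L N x ≤ C * Real.exp (-((L : ℝ) / 2) * x) := by
          rw [hCdef]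
          exact h_le L hL N hP hx0.le
        have h2 : 0 ≤ Real.log (1 + P * a) * D L N x :=
          mul_nonneg (Real.log_nonneg (by nlinarith)) (D_nonneg L hL N hx0.le)
        linarith
    have hIle := setIntegral_mono_on hInt0 hPhiint measurableSet_Ioi hmono
    have hsplit : (∫ x in Ioi (0 : ℝ), (Real.log (1 + P * a) * D L N x +
        Set.indicator (Ioi a) (fun y => C * Real.exp (-((L : ℝ) / 2) * y)) x)) =
        Real.log (1 + P * a) + C * (Real.exp (-((L : ℝ) / 2) * a) / ((L : ℝ) / 2)) := by
      rw [integral_add hDint hindint, MeasureTheory.integral_const_mul, integral_D L hL N le_rfl,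
        F_zero L hL, zero_pow hNne, sub_zero, mul_one]
      congr 1
      rw [setIntegral_indicator measurableSet_Ioi,
        show Ioi (0 : ℝ) ∩ Ioi a = Ioi a from by rw [Set.Ioi_inter_Ioi, max_eq_right ha0.le],
        MeasureTheory.integral_const_mul,
        integral_exp_neg_mul a (by linarith : (0 : ℝ) < (L : ℝ) / 2)]
    have htail : C * (Real.exp (-((L : ℝ) / 2) * a) / ((L : ℝ) / 2)) ≤ P * 2 ^ (L + 1) := by
      have hNexp : (N : ℝ) * Real.exp (-((L : ℝ) / 2) * a) ≤ 1 := by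
        have hee : Real.exp (-((L : ℝ) / 2) * a) ≤ Real.exp (-(2 * Real.log N)) := by
          apply Real.exp_le_exp.2
          rw [hadef]
          nlinarith
        have heq2 : (N : ℝ) * Real.exp (-(2 * Real.log N)) = Real.exp (-(Real.log N)) := by
          have h1 : Real.exp (Real.log N) = (N : ℝ) := Real.exp_log hNpos
          have hprod : Real.exp (-(Real.log N)) * Real.exp (Real.log N) = 1 := by
            rw [← Real.exp_add]; simp
          have hsq : Real.exp (-(2 * Real.log N)) =
              Real.exp (-(Real.log N)) * Real.exp (-(Real.log N)) := by
            rw [← Real.exp_add]; congr 1; ring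
          rw [hsq]
          linear_combination (Real.exp (-(Real.log (N : ℝ))) * Real.exp (-(Real.log (N : ℝ)))) *
            h1.symm + Real.exp (-(Real.log (N : ℝ))) * hprod
        calc (N : ℝ) * Real.exp (-((L : ℝ) / 2) * a)
            ≤ (N : ℝ) * Real.exp (-(2 * Real.log N)) := mul_le_mul_of_nonneg_left hee hNpos.le
          _ = Real.exp (-(Real.log N)) := heq2
          _ ≤ 1 := by rw [← Real.exp_zero]; exact Real.exp_le_exp.2 (by linarith)
      have heq3 : C * (Real.exp (-((L : ℝ) / 2) * a) / ((L : ℝ) / 2)) =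
          P * 2 ^ (L + 1) * ((N : ℝ) * Real.exp (-((L : ℝ) / 2) * a)) := by
        rw [hCdef, pow_succ]
        field_simp
      rw [heq3]
      nlinarith [mul_le_mul_of_nonneg_left hNexp
        (show (0 : ℝ) ≤ P * 2 ^ (L + 1) by positivity)]
    have hlogPa : Real.log (1 + P * a) ≤ Real.log (1 + 4 * P) + Real.log (1 + Real.log N) := by
      have hprod : 1 + P * a ≤ (1 + 4 * P) * (1 + Real.log N) := by
        rw [hadef]; nlinarith
      calc Real.log (1 + P * a) ≤ Real.log ((1 + 4 * P) * (1 + Real.log N)) :=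
            Real.log_le_log (by positivity) hprod
        _ = Real.log (1 + 4 * P) + Real.log (1 + Real.log N) :=
            Real.log_mul (by positivity) (by positivity)
    have h0 : (0 : ℝ) ≤ Real.log (1 + 4 * P) := Real.log_nonneg (by linarith)
    have h0' : (0 : ℝ) ≤ P * 2 ^ (L + 1) := by positivity
    have hc2' : (∫ x in Ioi (0 : ℝ), Real.log (1 + P * x) * D L N x) ≤
        (1 + Real.log (1 + 4 * P) + P * 2 ^ (L + 1)) * Real.log (1 + Real.log N) := by
      nlinarith [hIle, hsplit, htail, hlogPa, hlog1,
        mul_nonneg h0 (sub_nonneg.2 hlog1), mul_nonneg h0' (sub_nonneg.2 hlog1)]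
    have hfin : (1 + Real.log (1 + 4 * P) + P * 2 ^ (L + 1)) * Real.log (1 + Real.log N) ≤
        ((L : ℝ) * (1 + Real.log (1 + 4 * P) + P * 2 ^ (L + 1))) * Real.log (1 + g) := by
      have h00 : (0 : ℝ) ≤ 1 + Real.log (1 + 4 * P) + P * 2 ^ (L + 1) := by linarith
      calc (1 + Real.log (1 + 4 * P) + P * 2 ^ (L + 1)) * Real.log (1 + Real.log N)
          ≤ (1 + Real.log (1 + 4 * P) + P * 2 ^ (L + 1)) * ((L : ℝ) * Real.log (1 + g)) :=
            mul_le_mul_of_nonneg_left hT_ge h00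
        _ = ((L : ℝ) * (1 + Real.log (1 + 4 * P) + P * 2 ^ (L + 1))) * Real.log (1 + g) := by
            ring
    linarith [hc2', hfin]
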